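/- Suppose A, B > 0 are constants such that A·dCE(D) ≤ smCE(D) ≤ B·dCE(D) for all distributions D on [0,1]×{0,1}. Then B/A ≥ 3/2. -/

import Mathlib

open MeasureTheory

noncomputable section

/-- The real value of a boolean outcome. -/
def yval (b : Bool) : ℝ := if b then 1 else 0

/-- `Π` is an extension of the prediction-outcome distribution `D`: it is a probability
distribution of triples `(u, v, y)` whose `(v, y)`-marginal is `D`, with `u ∈ [0,1]`,
and `(u, y)` perfectly calibrated, i.e. `E[y | u] = u` (equivalently,
`E[(y - u) 1_{u ∈ S}] = 0` for every measurable `S`). -/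
def IsExtension (D : Measure (ℝ × Bool)) (π : Measure (ℝ × (ℝ × Bool))) : Prop :=
  IsProbabilityMeasure π ∧
  π.map Prod.snd = D ∧
  (∀ᵐ p ∂π, p.1 ∈ Set.Icc (0 : ℝ) 1) ∧
  ∀ S : Set ℝ, MeasurableSet S →
    (∫ p in {p : ℝ × (ℝ × Bool) | p.1 ∈ S}, yval p.2.2 ∂π) =
      ∫ p in {p : ℝ × (ℝ × Bool) | p.1 ∈ S}, p.1 ∂π

/-- The lower distance to calibration of a distribution `D` on `[0,1] × {0,1}`. -/
def dCE (D : Measure (ℝ × Bool)) : ℝ :=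
  sInf {r : ℝ | ∃ π : Measure (ℝ × (ℝ × Bool)), IsExtension D π ∧
    r = ∫ p, |p.1 - p.2.1| ∂π}

/-- The smooth calibration error of a distribution `D` on `[0,1] × {0,1}`:
the supremum over `1`-Lipschitz weight functions `w : [0,1] → [-1,1]` of
`|E[(y - v) w(v)]|`. -/
def smCE (D : Measure (ℝ × Bool)) : ℝ :=
  sSup {r : ℝ | ∃ w : ℝ → ℝ, LipschitzWith 1 w ∧ (∀ t : ℝ, w t ∈ Set.Icc (-1 : ℝ) 1) ∧
    r = |∫ p, (yval p.2 - p.1) * w p.1 ∂D|}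

/-! ### Auxiliary material -/

namespace Stmt3Aux

open scoped ENNReal

lemma integrable_dirac'' {α : Type*} [MeasurableSpace α] [MeasurableSingletonClass α]
    (f : α → ℝ) (x : α) : Integrable f (Measure.dirac x) :=
  (integrable_const (f x)).congr (ae_eq_dirac f).symm

/-- A two-point measure. -/
def twoPt {α : Type*} [MeasurableSpace α] (a b : ℝ≥0∞) (x y : α) : Measure α :=
  a • Measure.dirac x + b • Measure.dirac y

lemma integral_twoPt {α : Type*} [MeasurableSpace α] [MeasurableSingletonClass α]
    {a b : ℝ≥0∞} (ha : a ≠ ∞) (hb : b ≠ ∞) (x y : α) (f : α → ℝ) :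
    ∫ z, f z ∂(twoPt a b x y) = a.toReal * f x + b.toReal * f y := by
  rw [twoPt, integral_add_measure (((integrable_dirac'' f x).smul_measure ha))
      (((integrable_dirac'' f y).smul_measure hb)), integral_smul_measure,
    integral_smul_measure, integral_dirac, integral_dirac]
  simp [smul_eq_mul]

lemma twoPt_prob {α : Type*} [MeasurableSpace α] {a b : ℝ≥0∞} (hab : a + b = 1)
    (x y : α) : IsProbabilityMeasure (twoPt a b x y) := by
  constructor
  simp [twoPt, Measure.add_apply, hab]

lemma ae_twoPt {α : Type*} [MeasurableSpace α] {a b : ℝ≥0∞} {x y : α} {p : α → Prop}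
    (hp : MeasurableSet {z | p z}) (hx : p x) (hy : p y) :
    ∀ᵐ z ∂(twoPt a b x y), p z := by
  rw [Filter.eventually_iff, mem_ae_iff]
  have h1 : Measure.dirac x {z | p z}ᶜ = 0 := by
    rw [Measure.dirac_apply' _ hp.compl]
    simp [hx]
  have h2 : Measure.dirac y {z | p z}ᶜ = 0 := by
    rw [Measure.dirac_apply' _ hp.compl]
    simp [hy]
  simp [twoPt, Measure.add_apply, h1, h2]

/-- `D1`: prediction `1/2`, outcome `Bernoulli(3/4)`. -/
def D1 : Measure (ℝ × Bool) := twoPt (3/4) (1/4) ((1/2 : ℝ), true) ((1/2 : ℝ), false)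

/-- `D2`: mass 1/2 on `(1/4, 1)` and mass 1/2 on `(1/2, 0)`. -/
def D2 : Measure (ℝ × Bool) := twoPt (1/2) (1/2) ((1/4 : ℝ), true) ((1/2 : ℝ), false)

lemma D1_prob : IsProbabilityMeasure D1 := by
  refine twoPt_prob ?_ _ _
  rw [ENNReal.div_add_div_same, show (3:ENNReal)+1 = 4 by norm_num]
  exact ENNReal.div_self (by norm_num) (by norm_num)

lemma D2_prob : IsProbabilityMeasure D2 := by
  refine twoPt_prob ?_ _ _
  rw [ENNReal.div_add_div_same, show (1:ENNReal)+1 = 2 by norm_num]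
  exact ENNReal.div_self (by norm_num) (by norm_num)

lemma integral_D1 (f : ℝ × Bool → ℝ) :
    ∫ q, f q ∂D1 = 3/4 * f ((1/2 : ℝ), true) + 1/4 * f ((1/2 : ℝ), false) := by
  rw [D1, integral_twoPt ((ENNReal.div_lt_top (by norm_num) (by norm_num)).ne) ((ENNReal.div_lt_top (by norm_num) (by norm_num)).ne)]
  norm_num [ENNReal.toReal_div]

lemma integral_D2 (f : ℝ × Bool → ℝ) :
    ∫ q, f q ∂D2 = 1/2 * f ((1/4 : ℝ), true) + 1/2 * f ((1/2 : ℝ), false) := by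
  rw [D2, integral_twoPt ((ENNReal.div_lt_top (by norm_num) (by norm_num)).ne) ((ENNReal.div_lt_top (by norm_num) (by norm_num)).ne)]
  norm_num [ENNReal.toReal_div]

lemma meas_yval : Measurable yval := measurable_from_top

lemma meas_yval_snd : Measurable fun q : ℝ × Bool => yval q.2 :=
  meas_yval.comp measurable_snd

lemma meas_yval_sndsnd : Measurable fun p : ℝ × (ℝ × Bool) => yval p.2.2 :=
  meas_yval.comp (measurable_snd.comp measurable_snd)

/-- Extending `D` by a constant prediction `c` equal to `E[y]` gives an extension. -/
lemma isExtension_const (D : Measure (ℝ × Bool)) (hD : IsProbabilityMeasure D)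
    (c : ℝ) (hc : c ∈ Set.Icc (0:ℝ) 1) (hy : ∫ q, yval q.2 ∂D = c) :
    IsExtension D (D.map (fun q => (c, q))) := by
  haveI := hD
  have hφ : Measurable fun q : ℝ × Bool => ((c, q) : ℝ × (ℝ × Bool)) :=
    measurable_const.prodMk measurable_id
  refine ⟨Measure.isProbabilityMeasure_map hφ.aemeasurable, ?_, ?_, ?_⟩
  · rw [Measure.map_map measurable_snd hφ]
    simp [Function.comp_def]
  · rw [ae_map_iff hφ.aemeasurable (measurable_fst measurableSet_Icc)]
    exact Filter.Eventually.of_forall fun q => hc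
  · intro S hS
    have hsetm : MeasurableSet {p : ℝ × (ℝ × Bool) | p.1 ∈ S} := measurable_fst hS
    rw [setIntegral_map hsetm meas_yval_sndsnd.aestronglyMeasurable hφ.aemeasurable,
      setIntegral_map hsetm measurable_fst.aestronglyMeasurable hφ.aemeasurable]
    have hpre : (fun q : ℝ × Bool => ((c, q) : ℝ × (ℝ × Bool))) ⁻¹'
        {p : ℝ × (ℝ × Bool) | p.1 ∈ S} = {q : ℝ × Bool | c ∈ S} := rfl
    rw [hpre]
    by_cases hcS : c ∈ S
    · have : {q : ℝ × Bool | c ∈ S} = Set.univ := by simp [hcS]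
      rw [this, setIntegral_univ, setIntegral_univ, hy, integral_const]
      simp
    · have : {q : ℝ × Bool | c ∈ S} = ∅ := by simp [hcS]
      rw [this]
      simp

lemma D1_Ey : ∫ q, yval q.2 ∂D1 = 3/4 := by
  rw [integral_D1]; simp [yval]

lemma D2_Ey : ∫ q, yval q.2 ∂D2 = 1/2 := by
  rw [integral_D2]; simp [yval]

lemma D1_ae : ∀ᵐ q ∂D1, q.1 ∈ Set.Icc (0:ℝ) 1 := by
  refine ae_twoPt (measurable_fst measurableSet_Icc) ?_ ?_ <;> norm_num

lemma D2_ae : ∀ᵐ q ∂D2, q.1 ∈ Set.Icc (0:ℝ) 1 := by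
  refine ae_twoPt (measurable_fst measurableSet_Icc) ?_ ?_ <;> norm_num

/-- `smCE D1 ≤ 1/4`. -/
lemma smCE_D1_le : smCE D1 ≤ 1/4 := by
  apply Real.sSup_le
  · rintro r ⟨w, hw, hwb, rfl⟩
    rw [integral_D1]
    have h1 := (hwb (1/2)).1
    have h2 := (hwb (1/2)).2
    simp only [yval]
    norm_num
    rw [abs_le]
    constructor <;> nlinarith
  · norm_num

/-- every candidate value for `dCE D1` is at least `1/4`. -/
lemma dCE_D1_ge_aux (π : Measure (ℝ × (ℝ × Bool))) (hπ : IsExtension D1 π) :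
    1/4 ≤ ∫ p, |p.1 - p.2.1| ∂π := by
  obtain ⟨hprob, hmap, hae, hcal⟩ := hπ
  haveI := hprob
  -- v = 1/2 a.e.
  have hv : ∀ᵐ p ∂π, p.2.1 = 1/2 := by
    have hAm : MeasurableSet {q : ℝ × Bool | ¬ q.1 = 1/2} :=
      (measurable_fst (measurableSet_singleton (1/2 : ℝ))).compl
    have hDA : D1 {q : ℝ × Bool | ¬ q.1 = 1/2} = 0 := by
      have h1 : Measure.dirac ((1/2 : ℝ), true) {q : ℝ × Bool | ¬ q.1 = 1/2} = 0 := by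
        rw [Measure.dirac_apply' _ hAm]; simp
      have h2 : Measure.dirac ((1/2 : ℝ), false) {q : ℝ × Bool | ¬ q.1 = 1/2} = 0 := by
        rw [Measure.dirac_apply' _ hAm]; simp
      simp [D1, twoPt, Measure.add_apply, h1, h2]
    rw [Filter.eventually_iff, mem_ae_iff]
    have : π {p : ℝ × (ℝ × Bool) | p.2.1 = 1/2}ᶜ
        = π.map Prod.snd {q : ℝ × Bool | ¬ q.1 = 1/2} := by
      rw [Measure.map_apply measurable_snd hAm]
      rfl
    rw [this, hmap, hDA]
  -- u is integrable
  have hu_meas : Measurable fun p : ℝ × (ℝ × Bool) => p.1 := measurable_fst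
  have hu_int : Integrable (fun p : ℝ × (ℝ × Bool) => p.1) π := by
    refine Integrable.mono' (integrable_const (1:ℝ)) hu_meas.aestronglyMeasurable ?_
    filter_upwards [hae] with p hp
    rw [Real.norm_eq_abs, abs_le]
    exact ⟨by linarith [hp.1], hp.2⟩
  -- E[u] = E[y] = 3/4
  have hEu : ∫ p, p.1 ∂π = 3/4 := by
    have huniv := hcal Set.univ MeasurableSet.univ
    have hs : {p : ℝ × (ℝ × Bool) | p.1 ∈ Set.univ} = Set.univ := by simp
    rw [hs, setIntegral_univ, setIntegral_univ] at huniv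
    have hmapint : ∫ p, yval p.2.2 ∂π = ∫ q, yval q.2 ∂D1 := by
      rw [← hmap, integral_map measurable_snd.aemeasurable
        meas_yval_snd.aestronglyMeasurable]
    rw [← huniv, hmapint, D1_Ey]
  -- conclude
  have hcongr : ∫ p, |p.1 - p.2.1| ∂π = ∫ p, |p.1 - 1/2| ∂π := by
    apply integral_congr_ae
    filter_upwards [hv] with p hp
    rw [hp]
  rw [hcongr]
  have habs : |∫ p, (p.1 - 1/2) ∂π| ≤ ∫ p, |p.1 - 1/2| ∂π := by
    simpa [Real.norm_eq_abs] using
      norm_integral_le_integral_norm (μ := π) (f := fun p : ℝ × (ℝ × Bool) => p.1 - 1/2)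
  have hsub : ∫ p, (p.1 - 1/2) ∂π = 1/4 := by
    rw [integral_sub hu_int (integrable_const _), hEu, integral_const]
    simp
    norm_num
  rw [hsub] at habs
  calc (1/4 : ℝ) = |(1/4 : ℝ)| := (abs_of_nonneg (by norm_num)).symm
  _ ≤ _ := habs

lemma dCE_D1_ge : 1/4 ≤ dCE D1 := by
  apply le_csInf
  · exact ⟨_, ⟨_, isExtension_const D1 D1_prob (3/4) (by norm_num) D1_Ey, rfl⟩⟩
  · rintro r ⟨π, hπ, rfl⟩
    exact dCE_D1_ge_aux π hπ

/-- `dCE D2 ≤ 1/8`. -/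
lemma dCE_D2_le : dCE D2 ≤ 1/8 := by
  have hφ : Measurable fun q : ℝ × Bool => (((1:ℝ)/2, q) : ℝ × (ℝ × Bool)) :=
    measurable_const.prodMk measurable_id
  have hmem : (1/8 : ℝ) ∈ {r : ℝ | ∃ π : Measure (ℝ × (ℝ × Bool)), IsExtension D2 π ∧
      r = ∫ p, |p.1 - p.2.1| ∂π} := by
    refine ⟨D2.map (fun q => ((1:ℝ)/2, q)),
      isExtension_const D2 D2_prob (1/2) (by norm_num) D2_Ey, ?_⟩
    have hmeas : Measurable fun p : ℝ × (ℝ × Bool) => |p.1 - p.2.1| :=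
      (measurable_fst.sub (measurable_fst.comp measurable_snd)).abs
    rw [integral_map hφ.aemeasurable hmeas.aestronglyMeasurable]
    rw [integral_D2]
    norm_num [abs_of_nonneg]
  apply csInf_le _ hmem
  refine ⟨0, ?_⟩
  rintro r ⟨π, hπ, rfl⟩
  exact integral_nonneg fun p => abs_nonneg _

/-- The weight function witnessing `smCE D2 ≥ 3/16`. -/
def w2 : ℝ → ℝ := fun t => max (1 - |t - 1/4|) (-1)

lemma w2_lip : LipschitzWith 1 w2 := by
  refine LipschitzWith.of_dist_le_mul fun x y => ?_
  simp only [Real.dist_eq, w2, NNReal.coe_one, one_mul]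
  calc |max (1 - |x - 1/4|) (-1) - max (1 - |y - 1/4|) (-1)|
      ≤ |(1 - |x - 1/4|) - (1 - |y - 1/4|)| := abs_max_sub_max_le_abs _ _ _
    _ = |(|y - 1/4|) - (|x - 1/4|)| := by ring_nf
    _ ≤ |(y - 1/4) - (x - 1/4)| := abs_abs_sub_abs_le_abs_sub _ _
    _ = |x - y| := by rw [show (y - 1/4) - (x - 1/4) = -(x - y) by ring, abs_neg]

lemma w2_mem (t : ℝ) : w2 t ∈ Set.Icc (-1 : ℝ) 1 := by
  constructor
  · exact le_max_right _ _
  · apply max_le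
    · have := abs_nonneg (t - 1/4)
      linarith
    · norm_num

lemma w2_quarter : w2 (1/4) = 1 := by norm_num [w2]

lemma w2_half : w2 (1/2) = 3/4 := by
  rw [w2]
  rw [show |(1:ℝ)/2 - 1/4| = 1/4 by rw [abs_of_nonneg] <;> norm_num]
  norm_num

lemma smCE_D2_ge : 3/16 ≤ smCE D2 := by
  have hmem : (3/16 : ℝ) ∈ {r : ℝ | ∃ w : ℝ → ℝ, LipschitzWith 1 w ∧
      (∀ t : ℝ, w t ∈ Set.Icc (-1 : ℝ) 1) ∧
      r = |∫ p, (yval p.2 - p.1) * w p.1 ∂D2|} := by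
    refine ⟨w2, w2_lip, w2_mem, ?_⟩
    rw [integral_D2]
    simp only [yval]
    norm_num [w2_quarter, w2_half]
  apply le_csSup _ hmem
  refine ⟨2, ?_⟩
  rintro r ⟨w, hw, hwb, rfl⟩
  rw [integral_D2]
  have h1 := hwb (1/4)
  have h2 := hwb (1/2)
  simp only [Set.mem_Icc] at h1 h2
  simp only [yval]
  norm_num
  rw [abs_le]
  constructor <;> nlinarith [h1.1, h1.2, h2.1, h2.2]

lemma smCE_nonneg_D1 : 0 ≤ smCE D1 := by
  have hmem : (0 : ℝ) ∈ {r : ℝ | ∃ w : ℝ → ℝ, LipschitzWith 1 w ∧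
      (∀ t : ℝ, w t ∈ Set.Icc (-1 : ℝ) 1) ∧
      r = |∫ p, (yval p.2 - p.1) * w p.1 ∂D1|} := by
    refine ⟨fun _ => 0, LipschitzWith.const' 0, fun t => by norm_num, ?_⟩
    simp
  apply le_csSup _ hmem
  refine ⟨2, ?_⟩
  rintro r ⟨w, hw, hwb, rfl⟩
  rw [integral_D1]
  have h1 := hwb (1/2)
  simp only [Set.mem_Icc] at h1
  simp only [yval]
  norm_num
  rw [abs_le]
  constructor <;> nlinarith [h1.1, h1.2]

end Stmt3Aux

theorem stmt3 (A B : ℝ) (hA : 0 < A) (hB : 0 < B)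
    (h : ∀ D : Measure (ℝ × Bool), IsProbabilityMeasure D →
      (∀ᵐ p ∂D, p.1 ∈ Set.Icc (0 : ℝ) 1) →
      A * dCE D ≤ smCE D ∧ smCE D ≤ B * dCE D) :
    (3 : ℝ) / 2 ≤ B / A := by
  open Stmt3Aux in
  -- From D1 : A ≤ 1
  have h1 := h D1 D1_prob D1_ae
  have hA1 : A ≤ 1 := by
    have := le_trans h1.1 smCE_D1_le
    nlinarith [mul_le_mul_of_nonneg_left dCE_D1_ge hA.le]
  -- From D2 : 3/2 ≤ B
  have h2 := h D2 D2_prob D2_ae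
  have hB1 : 3/2 ≤ B := by
    have hle := le_trans smCE_D2_ge h2.2
    nlinarith [mul_le_mul_of_nonneg_left dCE_D2_le hB.le]
  rw [le_div_iff₀ hA]
  nlinarith

end
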